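/- Let G and H be additive commutative groups, ψ: G → H a surjective group homomorphism, R a G-graded commutative ring, and M a G-graded R-module. Then M is small in GrMod^G(R) if and only if the ψ-coarsening M_[ψ] is small in GrMod^H(R_[ψ]). -/

import Mathlib

set_option maxHeartbeats 1000000
set_option synthInstance.maxHeartbeats 400000


/-!
Common vocabulary: internally graded rings and modules, coarsening of gradings,
graded morphisms, and derived notions (injectivity, cogenerators, smallness, ...),
following Rohrer, "Coarsenings, injectives and Hom functors".
-/

open DirectSum

section Defs

variable {G H R : Type} [AddCommGroup G] [AddCommGroup H] [CommRing R]

/-- The `ψ`-coarsening of a `G`-grading: `(ℳ_[ψ])_h = ⨁_{g ∈ ψ⁻¹(h)} ℳ_g`. -/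
def coarsen {M : Type} [AddCommGroup M] (ψ : G →+ H) (ℳ : G → AddSubgroup M) (h : H) :
    AddSubgroup M :=
  ⨆ g ∈ ψ ⁻¹' {h}, ℳ g

/-- `(R, 𝒜)` is a `G`-graded commutative ring: the `𝒜 g` are additive subgroups whose
internal direct sum is `R`, and `𝒜 g * 𝒜 h ⊆ 𝒜 (g + h)`. -/
def IsGradedRing (𝒜 : G → AddSubgroup R) : Prop :=
  (1 : R) ∈ 𝒜 0 ∧
  (∀ {g h : G} {a b : R}, a ∈ 𝒜 g → b ∈ 𝒜 h → a * b ∈ 𝒜 (g + h)) ∧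
  (letI := Classical.decEq G; DirectSum.IsInternal 𝒜)

/-- `(M, ℳ)` is a `G`-graded module over the `G`-graded ring `(R, 𝒜)`. -/
def IsGradedModule {M : Type} [AddCommGroup M] [Module R M]
    (𝒜 : G → AddSubgroup R) (ℳ : G → AddSubgroup M) : Prop :=
  (∀ {g h : G} {r : R} {m : M}, r ∈ 𝒜 g → m ∈ ℳ h → r • m ∈ ℳ (g + h)) ∧
  (letI := Classical.decEq G; DirectSum.IsInternal ℳ)

/-- A morphism of `G`-graded `R`-modules is an `R`-linear map respecting the gradings. -/
def IsGradedHom {M N : Type} [AddCommGroup M] [Module R M]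
    [AddCommGroup N] [Module R N] (ℳ : G → AddSubgroup M) (𝒩 : G → AddSubgroup N)
    (f : M →ₗ[R] N) : Prop :=
  ∀ g : G, ∀ m ∈ ℳ g, f m ∈ 𝒩 g

/-- The grading of a direct sum of graded modules:
`(⨁_i N_i)_g` consists of the elements all of whose components lie in degree `g`. -/
def directSumGrading {ι : Type} {M : ι → Type}
    [∀ i, AddCommGroup (M i)] (ℳ : ∀ i, G → AddSubgroup (M i)) (g : G) :
    AddSubgroup (⨁ i, M i) where
  carrier := {x | ∀ i, x i ∈ ℳ i g}
  zero_mem' := fun i => by simp only [DirectSum.zero_apply, ZeroMemClass.zero_mem]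
  add_mem' := fun {x y} hx hy i => by
    rw [DirectSum.add_apply]; exact add_mem (hx i) (hy i)
  neg_mem' := fun {x} hx i => by
    rw [DFinsupp.neg_apply]; exact neg_mem (hx i)

/-- `(E, ℰ)` is an injective object of the category of `G`-graded `R`-modules:
every graded morphism into `E` extends along every injective graded morphism. -/
def IsInjectiveGradedModule (𝒜 : G → AddSubgroup R) {E : Type} [AddCommGroup E] [Module R E]
    (ℰ : G → AddSubgroup E) : Prop :=
  ∀ (A B : Type) [AddCommGroup A] [Module R A] [AddCommGroup B] [Module R B],
    ∀ (𝒮A : G → AddSubgroup A) (𝒮B : G → AddSubgroup B),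
      IsGradedModule 𝒜 𝒮A → IsGradedModule 𝒜 𝒮B →
      ∀ i : A →ₗ[R] B, Function.Injective i → IsGradedHom 𝒮A 𝒮B i →
      ∀ f : A →ₗ[R] E, IsGradedHom 𝒮A ℰ f →
      ∃ g : B →ₗ[R] E, IsGradedHom 𝒮B ℰ g ∧ g ∘ₗ i = f

/-- `(M, ℳ)` is a cogenerator of the category of `G`-graded `R`-modules: every nonzero
graded morphism is detected by a graded morphism into `M`. -/
def IsCogenerator (𝒜 : G → AddSubgroup R) {M : Type} [AddCommGroup M] [Module R M]
    (ℳ : G → AddSubgroup M) : Prop :=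
  ∀ (N N' : Type) [AddCommGroup N] [Module R N] [AddCommGroup N'] [Module R N'],
    ∀ (𝒩 : G → AddSubgroup N) (𝒩' : G → AddSubgroup N'),
      IsGradedModule 𝒜 𝒩 → IsGradedModule 𝒜 𝒩' →
      ∀ u : N →ₗ[R] N', IsGradedHom 𝒩 𝒩' u → u ≠ 0 →
      ∃ v : N' →ₗ[R] M, IsGradedHom 𝒩' ℳ v ∧ v ∘ₗ u ≠ 0

/-- `M` is a small graded module: every graded morphism from `M` into a direct sum of
graded modules factors through a finite sub-sum. -/
def IsSmall (𝒜 : G → AddSubgroup R) {M : Type} [AddCommGroup M] [Module R M]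
    (ℳ : G → AddSubgroup M) : Prop :=
  ∀ (ι : Type) (N : ι → Type) [∀ i, AddCommGroup (N i)] [∀ i, Module R (N i)],
    ∀ (𝒩 : ∀ i, G → AddSubgroup (N i)), (∀ i, IsGradedModule 𝒜 (𝒩 i)) →
      ∀ f : M →ₗ[R] ⨁ i, N i, IsGradedHom ℳ (directSumGrading 𝒩) f →
        ∃ s : Finset ι, ∀ (m : M) (i : ι), i ∉ s → f m i = 0

/-- `M` is `P`-small: every graded morphism from `M` into a direct sum of copies of `P`
factors through a finite sub-sum. -/
def IsSmallWrt {P : Type} [AddCommGroup P] [Module R P] (𝒬 : G → AddSubgroup P)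
    {M : Type} [AddCommGroup M] [Module R M] (ℳ : G → AddSubgroup M) : Prop :=
  ∀ (ι : Type) (f : M →ₗ[R] ⨁ (_ : ι), P),
    IsGradedHom ℳ (directSumGrading fun (_ : ι) => 𝒬) f →
      ∃ s : Finset ι, ∀ (m : M) (i : ι), i ∉ s → f m i = 0

/-- A `G`-graded ring is steady if all small graded modules over it are finitely generated. -/
def IsSteady (𝒜 : G → AddSubgroup R) : Prop :=
  ∀ (M : Type) [AddCommGroup M] [Module R M], ∀ ℳ : G → AddSubgroup M,
    IsGradedModule 𝒜 ℳ → IsSmall 𝒜 ℳ → Module.Finite R M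

/-- A graded ideal of the `G`-graded ring `(R, 𝒜)`: `I = ⨁_g (I ∩ R_g)`. -/
def IsGradedIdeal (𝒜 : G → AddSubgroup R) (I : Ideal R) : Prop :=
  I.toAddSubgroup = ⨆ g : G, I.toAddSubgroup ⊓ 𝒜 g

/-- A simple `G`-graded `R`-module: nonzero, and its only graded submodules are `0` and
the whole module. -/
def IsSimpleGradedModule (𝒜 : G → AddSubgroup R) {S : Type} [AddCommGroup S] [Module R S]
    (𝒮 : G → AddSubgroup S) : Prop :=
  IsGradedModule 𝒜 𝒮 ∧ Nontrivial S ∧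
    ∀ P : Submodule R S, (P.toAddSubgroup = ⨆ g : G, P.toAddSubgroup ⊓ 𝒮 g) →
      P = ⊥ ∨ P = ⊤

/-- The subgroup of `M →ₗ[R] N` consisting of the graded morphisms `M → N(g)`, i.e. the
degree-`g` component of the graded Hom module `⨁HOM(M, N)`. -/
def gradedHomSubgroup {M N : Type} [AddCommGroup M] [Module R M] [AddCommGroup N] [Module R N]
    (ℳ : G → AddSubgroup M) (𝒩 : G → AddSubgroup N) (g : G) : AddSubgroup (M →ₗ[R] N) where
  carrier := {u | ∀ g' : G, ∀ m ∈ ℳ g', u m ∈ 𝒩 (g + g')}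
  zero_mem' := fun g' m _ => by simp only [LinearMap.zero_apply, ZeroMemClass.zero_mem]
  add_mem' := fun {u v} hu hv g' m hm => by
    rw [LinearMap.add_apply]; exact add_mem (hu g' m hm) (hv g' m hm)
  neg_mem' := fun {u} hu g' m hm => by
    rw [LinearMap.neg_apply]; exact neg_mem (hu g' m hm)

end Defs

section Machinery
variable {Γ M : Type} [AddCommGroup M] [DecidableEq Γ]
variable (𝒞 : Γ → AddSubgroup M)

noncomputable def intEquiv (hint : DirectSum.IsInternal 𝒞) : (⨁ γ, 𝒞 γ) ≃+ M :=
  AddEquiv.ofBijective (DirectSum.coeAddMonoidHom 𝒞) hint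

lemma intEquiv_apply (hint : DirectSum.IsInternal 𝒞) (x : ⨁ γ, 𝒞 γ) :
    intEquiv 𝒞 hint x = DirectSum.coeAddMonoidHom 𝒞 x := rfl

lemma intEquiv_symm_of (hint : DirectSum.IsInternal 𝒞) {γ : Γ} (x : 𝒞 γ) :
    (intEquiv 𝒞 hint).symm ↑x = DirectSum.of (fun γ => 𝒞 γ) γ x := by
  rw [AddEquiv.symm_apply_eq, intEquiv_apply, DirectSum.coeAddMonoidHom_of]

noncomputable def projHom (hint : DirectSum.IsInternal 𝒞) (p : Γ → Prop) [DecidablePred p] :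
    M →+ M :=
  (DirectSum.toAddMonoid (fun γ => if p γ then (𝒞 γ).subtype else 0)).comp
    (intEquiv 𝒞 hint).symm.toAddMonoidHom

lemma projHom_of_mem (hint : DirectSum.IsInternal 𝒞) (p : Γ → Prop) [DecidablePred p]
    {γ : Γ} {m : M} (hm : m ∈ 𝒞 γ) :
    projHom 𝒞 hint p m = if p γ then m else 0 := by
  have h1 : projHom 𝒞 hint p m
      = (DirectSum.toAddMonoid (fun γ => if p γ then (𝒞 γ).subtype else 0))
          ((intEquiv 𝒞 hint).symm m) := rfl
  have h2 : (intEquiv 𝒞 hint).symm m = DirectSum.of (fun γ => 𝒞 γ) γ ⟨m, hm⟩ :=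
    intEquiv_symm_of 𝒞 hint ⟨m, hm⟩
  rw [h1, h2, DirectSum.toAddMonoid_of]
  split_ifs with h <;> simp

lemma internal_induction (hint : DirectSum.IsInternal 𝒞) {P : M → Prop} (h0 : P 0)
    (hadd : ∀ a b, P a → P b → P (a + b)) (hmem : ∀ (γ : Γ), ∀ m ∈ 𝒞 γ, P m) (m : M) : P m := by
  have key : ∀ x : ⨁ γ, 𝒞 γ, P (DirectSum.coeAddMonoidHom 𝒞 x) := by
    intro x
    refine DirectSum.induction_on x ?_ ?_ ?_
    · simpa using h0
    · intro γ b
      rw [DirectSum.coeAddMonoidHom_of]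
      exact hmem γ b b.2
    · intro a b ha hb
      rw [map_add]
      exact hadd _ _ ha hb
  have := key ((intEquiv 𝒞 hint).symm m)
  rwa [← intEquiv_apply 𝒞 hint, AddEquiv.apply_symm_apply] at this

lemma projHom_eq_component (hint : DirectSum.IsInternal 𝒞) (γ : Γ) (m : M) :
    projHom 𝒞 hint (· = γ) m = (((intEquiv 𝒞 hint).symm m) γ : M) := by
  refine internal_induction 𝒞 hint (P := fun m => projHom 𝒞 hint (· = γ) m = (((intEquiv 𝒞 hint).symm m) γ : M)) ?_ ?_ ?_ m
  · simp
  · intro a b ha hb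
    rw [map_add, map_add, DirectSum.add_apply, AddSubgroup.coe_add, ha, hb]
  · intro γ₀ m hm
    rw [projHom_of_mem 𝒞 hint _ hm, intEquiv_symm_of 𝒞 hint ⟨m, hm⟩]
    by_cases h : γ₀ = γ
    · subst h
      rw [if_pos rfl, DirectSum.of_eq_same]
    · rw [if_neg h, DirectSum.of_eq_of_ne _ _ _ (Ne.symm h)]
      simp

lemma projHom_mem (hint : DirectSum.IsInternal 𝒞) (γ : Γ) (m : M) :
    projHom 𝒞 hint (· = γ) m ∈ 𝒞 γ := by
  rw [projHom_eq_component]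
  exact (((intEquiv 𝒞 hint).symm m) γ).2

lemma exists_finset_proj (hint : DirectSum.IsInternal 𝒞) (m : M) :
    ∃ S : Finset Γ, (∀ γ ∉ S, projHom 𝒞 hint (· = γ) m = 0) ∧
      ∑ γ ∈ S, projHom 𝒞 hint (· = γ) m = m := by
  classical
  refine ⟨((intEquiv 𝒞 hint).symm m).support, ?_, ?_⟩
  · intro γ hγ
    rw [projHom_eq_component]
    rw [DFinsupp.notMem_support_iff] at hγ
    simp [hγ]
  · have h := DirectSum.sum_support_of ((intEquiv 𝒞 hint).symm m)
    have h2 := congrArg (DirectSum.coeAddMonoidHom 𝒞) h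
    rw [map_sum] at h2
    calc ∑ γ ∈ ((intEquiv 𝒞 hint).symm m).support, projHom 𝒞 hint (· = γ) m
        = ∑ γ ∈ ((intEquiv 𝒞 hint).symm m).support,
            (DirectSum.coeAddMonoidHom 𝒞) (DirectSum.of (fun γ => 𝒞 γ) γ (((intEquiv 𝒞 hint).symm m) γ)) := by
          refine Finset.sum_congr rfl fun γ _ => ?_
          rw [projHom_eq_component, DirectSum.coeAddMonoidHom_of]
      _ = (DirectSum.coeAddMonoidHom 𝒞) ((intEquiv 𝒞 hint).symm m) := h2
      _ = m := by rw [← intEquiv_apply 𝒞 hint, AddEquiv.apply_symm_apply]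

end Machinery

section CoarsenLemmas
variable {G H M : Type} [AddCommGroup G] [AddCommGroup H] [AddCommGroup M]
variable (ψ : G →+ H) (𝒞 : G → AddSubgroup M)

lemma mem_coarsen {g : G} {m : M} (hm : m ∈ 𝒞 g) {h : H} (hg : ψ g = h) :
    m ∈ coarsen ψ 𝒞 h := by
  subst hg
  unfold coarsen
  exact (le_iSup₂ (f := fun g' (_ : g' ∈ ψ ⁻¹' {ψ g}) => 𝒞 g') g rfl) hm

lemma coarsen_le {h : H} {K : AddSubgroup M} (hK : ∀ g, ψ g = h → 𝒞 g ≤ K) :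
    coarsen ψ 𝒞 h ≤ K :=
  iSup₂_le fun g hg => hK g hg

lemma projHom_coarsen [DecidableEq G] [DecidableEq H] (hint : DirectSum.IsInternal 𝒞) (h h' : H)
    [DecidablePred (fun g : G => ψ g = h)]
    {m : M} (hm : m ∈ coarsen ψ 𝒞 h') :
    projHom 𝒞 hint (fun g => ψ g = h) m = if h' = h then m else 0 := by
  by_cases hcase : h' = h
  · subst hcase
    rw [if_pos rfl]
    have hle : coarsen ψ 𝒞 h' ≤ ((projHom 𝒞 hint (fun g => ψ g = h')) - AddMonoidHom.id M).ker := by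
      refine coarsen_le ψ 𝒞 fun g hg => ?_
      intro y hy
      rw [AddMonoidHom.mem_ker, AddMonoidHom.sub_apply, AddMonoidHom.id_apply,
        projHom_of_mem 𝒞 hint _ hy, if_pos hg, sub_self]
    have := hle hm
    rw [AddMonoidHom.mem_ker, AddMonoidHom.sub_apply, AddMonoidHom.id_apply, sub_eq_zero] at this
    exact this
  · rw [if_neg hcase]
    have hle : coarsen ψ 𝒞 h' ≤ (projHom 𝒞 hint (fun g => ψ g = h)).ker := by
      refine coarsen_le ψ 𝒞 fun g hg => ?_
      intro y hy
      rw [AddMonoidHom.mem_ker, projHom_of_mem 𝒞 hint _ hy, if_neg]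
      rw [hg]
      exact hcase
    exact hle hm

lemma coarsen_isInternal [DecidableEq G] [DecidableEq H] (hint : DirectSum.IsInternal 𝒞) :
    DirectSum.IsInternal (coarsen ψ 𝒞) := by
  classical
  constructor
  · rw [injective_iff_map_eq_zero]
    intro x hx
    have key : ∀ (h : H) (x : ⨁ h, coarsen ψ 𝒞 h),
        projHom 𝒞 hint (fun g => ψ g = h) (DirectSum.coeAddMonoidHom (coarsen ψ 𝒞) x)
          = (x h : M) := by
      intro h x
      refine DirectSum.induction_on x ?_ ?_ ?_
      · simp
      · intro h' y
        rw [DirectSum.coeAddMonoidHom_of]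
        rw [projHom_coarsen ψ 𝒞 hint h h' y.2]
        by_cases hcase : h' = h
        · subst hcase
          rw [if_pos rfl, DirectSum.of_eq_same]
        · rw [if_neg hcase, DirectSum.of_eq_of_ne _ _ _ (Ne.symm hcase)]
          simp
      · intro a b ha hb
        rw [map_add, map_add, DirectSum.add_apply, AddSubgroup.coe_add, ha, hb]
    refine DFinsupp.ext fun h => ?_
    have := key h x
    rw [hx, map_zero] at this
    exact Subtype.ext this.symm
  · intro m
    have hrange : m ∈ (DirectSum.coeAddMonoidHom (coarsen ψ 𝒞)).range := by
      obtain ⟨S, h0, hsum⟩ := exists_finset_proj 𝒞 hint m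
      rw [← hsum]
      refine sum_mem fun γ _ => ?_
      exact ⟨DirectSum.of (fun h => coarsen ψ 𝒞 h) (ψ γ)
        ⟨projHom 𝒞 hint (· = γ) m, mem_coarsen ψ 𝒞 (projHom_mem 𝒞 hint γ m) rfl⟩,
        DirectSum.coeAddMonoidHom_of _ _ _⟩
    obtain ⟨x, hx⟩ := hrange
    exact ⟨x, hx⟩

lemma coarsen_smul_mem {R : Type} [CommRing R] [Module R M] (𝒜 : G → AddSubgroup R)
    (hsc : ∀ {g g' : G} {r : R} {m : M}, r ∈ 𝒜 g → m ∈ 𝒞 g' → r • m ∈ 𝒞 (g + g'))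
    {h h' : H} {r : R} {m : M} (hr : r ∈ coarsen ψ 𝒜 h) (hm : m ∈ coarsen ψ 𝒞 h') :
    r • m ∈ coarsen ψ 𝒞 (h + h') := by
  have step : ∀ g : G, ψ g = h → ∀ r ∈ 𝒜 g, ∀ m ∈ coarsen ψ 𝒞 h', r • m ∈ coarsen ψ 𝒞 (h + h') := by
    intro g hg r hrg m hm
    have hle : coarsen ψ 𝒞 h' ≤
        { carrier := {y : M | r • y ∈ coarsen ψ 𝒞 (h + h')}
          zero_mem' := by simp only [Set.mem_setOf_eq, smul_zero]; exact zero_mem _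
          add_mem' := fun {a b} ha hb => by
            simp only [Set.mem_setOf_eq, smul_add] at *
            exact add_mem ha hb
          neg_mem' := fun {a} ha => by
            simp only [Set.mem_setOf_eq, smul_neg] at *
            exact neg_mem ha } := by
      refine coarsen_le ψ 𝒞 fun g' hg' y hy => ?_
      show r • y ∈ coarsen ψ 𝒞 (h + h')
      refine mem_coarsen ψ 𝒞 (hsc hrg hy) ?_
      rw [map_add, hg, hg']
    exact hle hm
  have hle2 : coarsen ψ 𝒜 h ≤
      { carrier := {r : R | ∀ m ∈ coarsen ψ 𝒞 h', r • m ∈ coarsen ψ 𝒞 (h + h')}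
        zero_mem' := fun m _ => by rw [zero_smul]; exact zero_mem _
        add_mem' := fun {a b} ha hb m hm => by
          rw [add_smul]; exact add_mem (ha m hm) (hb m hm)
        neg_mem' := fun {a} ha m hm => by
          rw [neg_smul]; exact neg_mem (ha m hm) } :=
    coarsen_le ψ 𝒜 fun g hg r hr => step g hg r hr
  exact hle2 hr m hm

end CoarsenLemmas

section ChainLemmas

/-- A module satisfying the countable chain condition is small w.r.t. any gradings. -/
lemma chainCond_to_isSmall {Γ R M : Type} [AddCommGroup Γ] [CommRing R] [AddCommGroup M]
    [Module R M]
    (hcc : ∀ U : ℕ → Submodule R M, Monotone U → (∀ m : M, ∃ n, m ∈ U n) → ∃ n, U n = ⊤)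
    (ℬ : Γ → AddSubgroup R) (𝒞 : Γ → AddSubgroup M) : IsSmall ℬ 𝒞 := by
  intro ι N _ _ 𝒩 _ f _
  classical
  by_cases hT : {i : ι | ∃ m, f m i ≠ 0}.Finite
  · refine ⟨hT.toFinset, fun m i hi => ?_⟩
    by_contra hne
    exact hi (hT.mem_toFinset.mpr ⟨m, hne⟩)
  · exfalso
    have hT' : Set.Infinite {i : ι | ∃ m, f m i ≠ 0} := hT
    set emb := Set.Infinite.natEmbedding _ hT' with hemb
    set idx : ℕ → ι := fun k => ((emb k : {i : ι | ∃ m, f m i ≠ 0}) : ι) with hidx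
    have hinj : Function.Injective idx := fun a b hab => emb.injective (Subtype.ext hab)
    set U : ℕ → Submodule R M := fun n =>
      { carrier := {m : M | ∀ k, n ≤ k → f m (idx k) = 0}
        zero_mem' := fun k _ => by rw [map_zero, DirectSum.zero_apply]
        add_mem' := fun {a b} ha hb k hk => by
          rw [map_add, DirectSum.add_apply, ha k hk, hb k hk, add_zero]
        smul_mem' := fun r m hm k hk => by
          rw [map_smul, DFinsupp.smul_apply, hm k hk, smul_zero] } with hU
    have hmono : Monotone U := fun n n' h m hm k hk => hm k (le_trans h hk)
    have hcover : ∀ m : M, ∃ n, m ∈ U n := by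
      intro m
      have hfin : {k : ℕ | idx k ∈ ((f m).support : Set ι)}.Finite :=
        Set.Finite.preimage (Set.injOn_of_injective hinj) ((f m).support.finite_toSet)
      obtain ⟨b, hb⟩ := hfin.bddAbove
      refine ⟨b + 1, fun k hk => ?_⟩
      by_contra h0
      have hmem : k ∈ {k : ℕ | idx k ∈ ((f m).support : Set ι)} := by
        simp only [Set.mem_setOf_eq, Finset.coe_sort_coe, Finset.mem_coe,
          DFinsupp.mem_support_iff]
        exact h0
      have := hb hmem
      omega
    obtain ⟨n, hn⟩ := hcc U hmono hcover
    obtain ⟨m, hm0⟩ := (emb n).2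
    have hmem : m ∈ U n := hn ▸ Submodule.mem_top
    exact hm0 (hmem n le_rfl)

/-- Smallness implies the countable chain condition (for arbitrary submodule chains). -/
lemma isSmall_to_chainCond {Γ R M : Type} [AddCommGroup Γ] [CommRing R] [AddCommGroup M]
    [Module R M] (ℬ : Γ → AddSubgroup R) (𝒞 : Γ → AddSubgroup M)
    (hBint : (letI := Classical.decEq Γ; DirectSum.IsInternal ℬ))
    (hsc : ∀ {γ γ' : Γ} {r : R} {m : M}, r ∈ ℬ γ → m ∈ 𝒞 γ' → r • m ∈ 𝒞 (γ + γ'))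
    (hCint : (letI := Classical.decEq Γ; DirectSum.IsInternal 𝒞))
    (hsmall : IsSmall ℬ 𝒞)
    (U : ℕ → Submodule R M) (hmono : Monotone U) (hcover : ∀ m : M, ∃ n, m ∈ U n) :
    ∃ n, U n = ⊤ := by
  letI : DecidableEq Γ := Classical.decEq Γ
  classical
  have hπmem : ∀ γ m, projHom 𝒞 hCint (· = γ) m ∈ 𝒞 γ := fun γ m => projHom_mem 𝒞 hCint γ m
  have hπof : ∀ {γ₀ γ : Γ} {m : M}, m ∈ 𝒞 γ₀ →
      projHom 𝒞 hCint (· = γ) m = if γ₀ = γ then m else 0 :=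
    fun {γ₀ γ m} hm => projHom_of_mem 𝒞 hCint _ hm
  have hshift : ∀ (δ : Γ) (r : R), r ∈ ℬ δ → ∀ (m : M) (γ : Γ),
      projHom 𝒞 hCint (· = γ) (r • m) = r • projHom 𝒞 hCint (· = γ - δ) m := by
    intro δ r hr m
    refine internal_induction 𝒞 hCint
      (P := fun m => ∀ γ, projHom 𝒞 hCint (· = γ) (r • m)
        = r • projHom 𝒞 hCint (· = γ - δ) m) ?_ ?_ ?_ m
    · intro γ; rw [smul_zero, map_zero, map_zero, smul_zero]
    · intro a b ha hb γ
      rw [smul_add, map_add, map_add, smul_add, ha γ, hb γ]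
    · intro γ₀ x hx γ
      have h1 : r • x ∈ 𝒞 (δ + γ₀) := hsc hr hx
      rw [hπof h1, hπof hx]
      by_cases hc : γ₀ = γ - δ
      · rw [if_pos hc, if_pos (show δ + γ₀ = γ by rw [hc]; abel)]
      · rw [if_neg hc, if_neg (fun hcon : δ + γ₀ = γ => hc (by rw [← hcon]; abel)), smul_zero]
  have hUsmul : ∀ (n : ℕ) (r : R) (m : M), (∀ γ, projHom 𝒞 hCint (· = γ) m ∈ U n) →
      ∀ γ, projHom 𝒞 hCint (· = γ) (r • m) ∈ U n := by
    intro n r m hm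
    refine internal_induction ℬ hBint
      (P := fun r => ∀ γ, projHom 𝒞 hCint (· = γ) (r • m) ∈ U n) ?_ ?_ ?_ r
    · intro γ; rw [zero_smul, map_zero]; exact zero_mem _
    · intro a b ha hb γ; rw [add_smul, map_add]; exact add_mem (ha γ) (hb γ)
    · intro δ r hr γ
      rw [hshift δ r hr m γ]
      exact Submodule.smul_mem _ _ (hm _)
  set W : ℕ → Submodule R M := fun n =>
    { carrier := {m : M | ∀ γ, projHom 𝒞 hCint (· = γ) m ∈ U n}
      zero_mem' := fun γ => by rw [map_zero]; exact zero_mem _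
      add_mem' := fun {a b} ha hb γ => by rw [map_add]; exact add_mem (ha γ) (hb γ)
      smul_mem' := fun r {m} hm => hUsmul n r m hm } with hWdef
  have hWmem : ∀ {n : ℕ} {m : M}, m ∈ W n ↔ ∀ γ, projHom 𝒞 hCint (· = γ) m ∈ U n := Iff.rfl
  have hWU : ∀ n, W n ≤ U n := by
    intro n m hm
    obtain ⟨S, h0, hsum⟩ := exists_finset_proj 𝒞 hCint m
    rw [← hsum]
    exact sum_mem fun γ _ => hWmem.mp hm γ
  have hWmono : Monotone W := fun n n' h m hm γ => hmono h (hWmem.mp hm γ)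
  have hWcover : ∀ m : M, ∃ n, m ∈ W n := by
    intro m
    obtain ⟨S, h0, hsum⟩ := exists_finset_proj 𝒞 hCint m
    refine ⟨S.sup fun γ => Nat.find (hcover (projHom 𝒞 hCint (· = γ) m)), hWmem.mpr fun γ => ?_⟩
    by_cases hγ : γ ∈ S
    · exact hmono (Finset.le_sup hγ) (Nat.find_spec (hcover (projHom 𝒞 hCint (· = γ) m)))
    · rw [h0 γ hγ]; exact zero_mem _
  have hWclosed : ∀ {n : ℕ} {m : M}, m ∈ W n → ∀ γ, projHom 𝒞 hCint (· = γ) m ∈ W n := by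
    intro n m hm γ
    refine hWmem.mpr fun γ' => ?_
    rw [hπof (hπmem γ m)]
    split_ifs
    · exact hWmem.mp hm γ
    · exact zero_mem _
  -- quotient gradings
  set Q : ∀ n : ℕ, Γ → AddSubgroup (M ⧸ W n) := fun n γ =>
    AddSubgroup.map ((W n).mkQ).toAddMonoidHom (𝒞 γ) with hQdef
  set q : ∀ (n : ℕ) (γ : Γ), 𝒞 γ →+ Q n γ := fun n γ =>
    AddMonoidHom.mk' (fun x => ⟨(W n).mkQ x, AddSubgroup.mem_map.mpr ⟨x, x.2, rfl⟩⟩)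
      (fun a b => Subtype.ext (by simp [map_add])) with hqdef
  have hQint : ∀ n : ℕ, Function.Bijective (DirectSum.coeAddMonoidHom (Q n)) := by
    intro n
    set F : (⨁ γ, 𝒞 γ) →+ ⨁ γ, Q n γ :=
      DirectSum.toAddMonoid (fun γ => (DirectSum.of (fun γ' => Q n γ') γ).comp (q n γ)) with hF
    have hFcomm : ∀ z, DirectSum.coeAddMonoidHom (Q n) (F z)
        = (W n).mkQ (DirectSum.coeAddMonoidHom 𝒞 z) := by
      intro z
      refine DirectSum.induction_on z ?_ ?_ ?_
      · simp
      · intro γ b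
        rw [hF, DirectSum.toAddMonoid_of, AddMonoidHom.comp_apply, DirectSum.coeAddMonoidHom_of,
          DirectSum.coeAddMonoidHom_of]
        rfl
      · intro a b ha hb
        rw [map_add, map_add, map_add, map_add, ha, hb]
    have hFcomp : ∀ (z : ⨁ γ, 𝒞 γ) (γ : Γ), F z γ = q n γ (z γ) := by
      intro z
      refine DirectSum.induction_on z ?_ ?_ ?_
      · intro γ; rw [map_zero, DirectSum.zero_apply, DirectSum.zero_apply, map_zero]
      · intro γ₀ b γ
        rw [hF, DirectSum.toAddMonoid_of, AddMonoidHom.comp_apply]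
        by_cases hc : γ₀ = γ
        · subst hc
          rw [DirectSum.of_eq_same, DirectSum.of_eq_same]
        · rw [DirectSum.of_eq_of_ne _ _ _ (Ne.symm hc), DirectSum.of_eq_of_ne _ _ _ (Ne.symm hc), map_zero]
      · intro a b ha hb γ
        rw [map_add, DirectSum.add_apply, DirectSum.add_apply, map_add, ha γ, hb γ]
    have hFsurj : Function.Surjective F := by
      intro x
      refine DirectSum.induction_on x ?_ ?_ ?_
      · exact ⟨0, map_zero _⟩
      · intro γ b
        obtain ⟨m0, hm0, hmk⟩ := AddSubgroup.mem_map.mp b.2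
        refine ⟨DirectSum.of (fun γ' => 𝒞 γ') γ ⟨m0, hm0⟩, ?_⟩
        rw [hF, DirectSum.toAddMonoid_of, AddMonoidHom.comp_apply]
        congr 1
        exact Subtype.ext hmk
      · rintro a b ⟨za, rfl⟩ ⟨zb, rfl⟩
        exact ⟨za + zb, map_add _ _ _⟩
    constructor
    · rw [injective_iff_map_eq_zero]
      intro x hx
      obtain ⟨z, rfl⟩ := hFsurj x
      rw [hFcomm] at hx
      have hzW : DirectSum.coeAddMonoidHom 𝒞 z ∈ W n := by
        rwa [Submodule.mkQ_apply, Submodule.Quotient.mk_eq_zero] at hx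
      refine DFinsupp.ext fun γ => ?_
      rw [hFcomp z γ, DirectSum.zero_apply]
      have hsymm : (intEquiv 𝒞 hCint).symm (DirectSum.coeAddMonoidHom 𝒞 z) = z := by
        rw [← intEquiv_apply 𝒞 hCint, AddEquiv.symm_apply_apply]
      have hz : ((z γ : M)) ∈ W n := by
        have h1 : (z γ : M) = projHom 𝒞 hCint (· = γ) (DirectSum.coeAddMonoidHom 𝒞 z) := by
          rw [projHom_eq_component, hsymm]
        rw [h1]
        exact hWclosed hzW γ
      refine Subtype.ext ?_
      show (W n).mkQ (z γ : M) = 0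
      rw [Submodule.mkQ_apply, Submodule.Quotient.mk_eq_zero]
      exact hz
    · intro y
      obtain ⟨m, rfl⟩ := Submodule.mkQ_surjective (W n) y
      refine ⟨F ((intEquiv 𝒞 hCint).symm m), ?_⟩
      rw [hFcomm, ← intEquiv_apply 𝒞 hCint, AddEquiv.apply_symm_apply]
  have hQgraded : ∀ n, IsGradedModule ℬ (Q n) := by
    intro n
    constructor
    · intro γ γ' r x hr hx
      obtain ⟨m0, hm0, rfl⟩ := AddSubgroup.mem_map.mp hx
      refine AddSubgroup.mem_map.mpr ⟨r • m0, hsc hr hm0, ?_⟩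
      show (W n).mkQ (r • m0) = r • (W n).mkQ m0
      rw [map_smul]
    · exact hQint n
  -- the canonical map into the direct sum of the quotients
  have key : ∃ f0 : M → ⨁ n : ℕ, M ⧸ W n, ∀ m k, f0 m k = (W k).mkQ m := by
    refine ⟨fun m => DFinsupp.mk (Finset.range (Nat.find (hWcover m) + 1))
      (fun k => (W (k : ℕ)).mkQ m), fun m k => ?_⟩
    rw [DFinsupp.mk_apply]
    by_cases hk : k ∈ Finset.range (Nat.find (hWcover m) + 1)
    · rw [dif_pos hk]
    · rw [dif_neg hk]
      symm
      rw [Submodule.mkQ_apply, Submodule.Quotient.mk_eq_zero]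
      rw [Finset.mem_range, not_lt] at hk
      exact hWmono (le_trans (Nat.le_succ _) hk) (Nat.find_spec (hWcover m))
  obtain ⟨f0, hf0⟩ := key
  set f : M →ₗ[R] ⨁ n : ℕ, M ⧸ W n :=
    { toFun := f0
      map_add' := fun a b => DFinsupp.ext fun k => by
        rw [hf0, DirectSum.add_apply, hf0, hf0, map_add]
      map_smul' := fun r a => DFinsupp.ext fun k => by
        rw [hf0, DFinsupp.smul_apply, hf0, map_smul]
        rfl } with hfdef
  have hfapply : ∀ m k, f m k = (W k).mkQ m := hf0
  have hfgr : IsGradedHom 𝒞 (directSumGrading Q) f := by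
    intro γ m hm
    intro k
    rw [hfapply m k]
    exact AddSubgroup.mem_map.mpr ⟨m, hm, rfl⟩
  obtain ⟨s, hs⟩ := hsmall ℕ (fun n => M ⧸ W n) Q hQgraded f hfgr
  refine ⟨s.sup id + 1, ?_⟩
  have hns : s.sup id + 1 ∉ s := by
    intro hmem
    have := Finset.le_sup (f := id) hmem
    simp only [id] at this
    omega
  refine Submodule.eq_top_iff'.mpr fun m => ?_
  refine hWU _ ?_
  have h0 : f m (s.sup id + 1) = 0 := hs m _ hns
  rw [hfapply] at h0
  rwa [Submodule.mkQ_apply, Submodule.Quotient.mk_eq_zero] at h0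

end ChainLemmas

/-- **Statement 11** (Proposition 2.30 a)): `M` is a small `G`-graded `R`-module if and
only if `M_[ψ]` is a small `H`-graded `R_[ψ]`-module. -/
theorem small_iff_coarsening_small
    {G H R M : Type} [AddCommGroup G] [AddCommGroup H] [CommRing R]
    [AddCommGroup M] [Module R M]
    (ψ : G →+ H) (hψ : Function.Surjective ψ)
    (𝒜 : G → AddSubgroup R) (h𝒜 : IsGradedRing 𝒜)
    (ℳ : G → AddSubgroup M) (hℳ : IsGradedModule 𝒜 ℳ) :
    IsSmall 𝒜 ℳ ↔ IsSmall (coarsen ψ 𝒜) (coarsen ψ ℳ) := by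
  classical
  letI : DecidableEq G := Classical.decEq G
  letI : DecidableEq H := Classical.decEq H
  obtain ⟨hone, hmul, hAint⟩ := h𝒜
  obtain ⟨hsc, hMint⟩ := hℳ
  constructor
  · intro hsmall
    refine chainCond_to_isSmall (Γ := H) ?_ _ _
    exact fun U hm hc =>
      isSmall_to_chainCond 𝒜 ℳ hAint (fun {g g' r m} hr hm' => hsc hr hm') hMint hsmall U hm hc
  · intro hsmall
    refine chainCond_to_isSmall (Γ := G) ?_ _ _
    intro U hm hc
    refine isSmall_to_chainCond (coarsen ψ 𝒜) (coarsen ψ ℳ) ?_ ?_ ?_ hsmall U hm hc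
    · exact coarsen_isInternal ψ 𝒜 hAint
    · intro h h' r m hr hm'
      exact coarsen_smul_mem ψ ℳ 𝒜 (fun {g g' r m} a b => hsc a b) hr hm'
    · exact coarsen_isInternal ψ ℳ hMint
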